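/- Let 𝒜 = {a,b} and for n ≥ 1 let v_n = (ab)^n and w_n = a^n b^n. Then v_n and w_n are related positive words and d_cbi(v_n, w_n) = ⌊n/2⌋; equivalently, cl_{F(a,b)}(a^n b^n + (ab)^{-n}) = ⌊n/2⌋ in the free group on {a,b}. -/

import Mathlib

open scoped commutatorElement in
/-- The commutator length of `g`: the least `k` such that `g` is a product of
`k` commutators (and `0` if no such `k` exists, e.g. `cl` of the identity is `0`). -/
noncomputable def cl (G : Type*) [Group G] (g : G) : ℕ :=
  sInf {k | ∃ l : List (G × G), l.length = k ∧ (l.map fun p => ⁅p.1, p.2⁆).prod = g}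

/-- The commutator length of a chain `g₁ + ⋯ + gₙ`, encoded as a list:
the minimum of `cl` over all products of conjugates `t₁g₁t₁⁻¹ ⋯ tₙgₙtₙ⁻¹`. -/
noncomputable def clChain (G : Type*) [Group G] (c : List G) : ℕ :=
  sInf {m | ∃ t : List G, t.length = c.length ∧
    m = cl G (List.zipWith (fun a b => a * b * a⁻¹) t c).prod}

/-- Two positive words are related if they contain the same number of each letter. -/
def Related {A : Type*} [DecidableEq A] (v w : List A) : Prop :=
  ∀ a : A, v.count a = w.count a

/-- `w` is a cyclic block interchange of `v`. -/
def IsCBI {A : Type*} (v w : List A) : Prop :=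
  ∃ v' w' : List A, List.IsRotated v' v ∧ List.IsRotated w' w ∧
    ∃ w1 w2 w3 w4 : List A, v' = w1 ++ w2 ++ w3 ++ w4 ∧ w' = w1 ++ w4 ++ w3 ++ w2

open Classical in
/-- The cyclic block interchange distance between two related words. -/
noncomputable def dcbi {A : Type*} (v w : List A) : ℕ :=
  if List.IsRotated v w then 0
  else sInf {k | ∃ z : ℕ → List A, z 0 = v ∧ z k = w ∧ ∀ i < k, IsCBI (z i) (z (i + 1))}

/-- A positive word regarded as an element of the free group. -/
def toFree {A : Type*} (v : List A) : FreeGroup A := (v.map FreeGroup.of).prod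

/-- The two-letter alphabet `𝒜 = {a,b}`. -/
inductive AB where
  | a | b
deriving DecidableEq

/-- The word `vₙ = (ab)ⁿ`. -/
def vAB (n : ℕ) : List AB := (List.replicate n [AB.a, AB.b]).flatten

/-- The word `wₙ = aⁿbⁿ`. -/
def wAB (n : ℕ) : List AB := List.replicate n AB.a ++ List.replicate n AB.b


open scoped commutatorElement

open CircleDeg1Lift

noncomputable def tu (f : CircleDeg1Liftˣ) : ℝ :=
  translationNumber (f : CircleDeg1Lift)

theorem tu_inv (f : CircleDeg1Liftˣ) : tu f⁻¹ = -tu f :=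
  translationNumber_units_inv f

theorem tu_conj (u f : CircleDeg1Liftˣ) : tu (u * f * u⁻¹) = tu f := by
  have := translationNumber_conj_eq u (f : CircleDeg1Lift)
  simpa [tu, Units.val_mul] using this

/-- translation (as a unit) -/
noncomputable def Tr (c : ℝ) : CircleDeg1Liftˣ := translate (Multiplicative.ofAdd c)

theorem Tr_apply (c x : ℝ) : (Tr c : CircleDeg1Lift) x = c + x := rfl

theorem tu_Tr (c : ℝ) : tu (Tr c) = c := translationNumber_translate c

theorem commute_Tr_int (f : CircleDeg1Lift) (m : ℤ) :
    Commute ((Tr m : CircleDeg1Liftˣ) : CircleDeg1Lift) f := by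
  rw [commute_iff_commute]
  have h := (f.commute_int_add m).symm
  convert h using 1
  funext x
  exact Tr_apply _ _

theorem tu_mul_Tr_int (f : CircleDeg1Liftˣ) (m : ℤ) :
    tu (f * Tr m) = tu f + m := by
  have h : Commute ((f : CircleDeg1Liftˣ) : CircleDeg1Lift) ((Tr m : CircleDeg1Liftˣ) : CircleDeg1Lift) :=
    (commute_Tr_int (f : CircleDeg1Lift) m).symm
  have h2 := translationNumber_mul_of_commute h
  have h3 : translationNumber ((Tr m : CircleDeg1Liftˣ) : CircleDeg1Lift) = (m : ℝ) := tu_Tr m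
  rw [h3] at h2
  simpa [tu, Units.val_mul] using h2

/-- Sharp quasimorphism upper bound: τ(f g) ≤ τ f + τ g + 1. -/
theorem tu_mul_le (f g : CircleDeg1Liftˣ) : tu (f * g) ≤ tu f + tu g + 1 := by
  set c : ℤ := ⌊tu f + tu g⌋ + 1 with hc
  have hcle : (c : ℝ) ≤ tu f + tu g + 1 := by
    push_cast [hc]
    linarith [Int.floor_le (tu f + tu g)]
  by_contra hlt
  push_neg at hlt
  have hc_lt : (c : ℝ) < tu (f * g) := lt_of_le_of_lt hcle hlt
  -- pointwise: ∀ x, x + c < (f*g) x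
  have hpt : ∀ x : ℝ, x + c < ((f : CircleDeg1Lift) * (g : CircleDeg1Lift)) x := by
    intro x
    have := lt_map_of_int_lt_translationNumber (f := ((f * g : CircleDeg1Liftˣ) : CircleDeg1Lift)) (n := c) (by simpa [tu] using hc_lt) x
    simpa [Units.val_mul] using this
  -- deduce pointwise (Tr c) * g⁻¹ ≤ f
  have hle : ((Tr c * g⁻¹ : CircleDeg1Liftˣ) : CircleDeg1Lift) ≤ (f : CircleDeg1Lift) := by
    intro y
    have h1 := hpt (((g⁻¹ : CircleDeg1Liftˣ) : CircleDeg1Lift) y)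
    have h2 : ((g : CircleDeg1Liftˣ) : CircleDeg1Lift) (((g⁻¹ : CircleDeg1Liftˣ) : CircleDeg1Lift) y) = y := CircleDeg1Lift.units_apply_inv_apply g y
    have h3 : ((f : CircleDeg1Lift) * (g : CircleDeg1Lift)) (((g⁻¹ : CircleDeg1Liftˣ) : CircleDeg1Lift) y) = (f : CircleDeg1Lift) y := by
      rw [mul_apply, h2]
    rw [h3] at h1
    have : ((Tr c * g⁻¹ : CircleDeg1Liftˣ) : CircleDeg1Lift) y = c + ((g⁻¹ : CircleDeg1Liftˣ) : CircleDeg1Lift) y := by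
      simp [Units.val_mul, mul_apply, Tr_apply]
    rw [this]
    linarith
  have hmono := translationNumber_mono hle
  have : tu (Tr c * g⁻¹) = (c : ℝ) - tu g := by
    have h1 : tu (Tr c * g⁻¹) = tu (g⁻¹ * Tr c) := by
      have : g⁻¹ * Tr c = g⁻¹ * (Tr c * g⁻¹) * g⁻¹⁻¹ := by group
      rw [this, tu_conj]
    rw [h1, tu_mul_Tr_int, tu_inv]; ring
  rw [show translationNumber (((Tr c * g⁻¹ : CircleDeg1Liftˣ)) : CircleDeg1Lift) = tu (Tr c * g⁻¹) from rfl, this] at hmono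
  have : (c : ℝ) ≤ tu f + tu g := by
    have : tu f = translationNumber (f : CircleDeg1Lift) := rfl
    linarith [hmono]
  have : tu f + tu g < c := by
    push_cast [hc]
    linarith [Int.lt_floor_add_one (tu f + tu g)]
  linarith

theorem tu_mul_ge (f g : CircleDeg1Liftˣ) : tu f + tu g - 1 ≤ tu (f * g) := by
  have h := tu_mul_le g⁻¹ f⁻¹
  have : g⁻¹ * f⁻¹ = (f * g)⁻¹ := by group
  rw [this, tu_inv, tu_inv, tu_inv] at h
  linarith

theorem tu_commutator_le (f g : CircleDeg1Liftˣ) : tu ⁅f, g⁆ ≤ 1 := by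
  have h1 : ⁅f, g⁆ = (f * g) * (g * f)⁻¹ := by
    rw [commutatorElement_def]; group
  have h2 : tu (g * f) = tu (f * g) := by
    have : g * f = f⁻¹ * (f * g) * f⁻¹⁻¹ := by group
    rw [this, tu_conj]
  calc tu ⁅f, g⁆ = tu ((f * g) * (g * f)⁻¹) := by rw [h1]
    _ ≤ tu (f * g) + tu (g * f)⁻¹ + 1 := tu_mul_le _ _
    _ = 1 := by rw [tu_inv, h2]; ring

/-- Milnor–Wood: a product of k ≥ 1 commutators has translation number ≤ 2k - 1. -/
theorem tu_prod_commutators_le (L : List (CircleDeg1Liftˣ × CircleDeg1Liftˣ)) (hL : L ≠ []) :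
    tu ((L.map fun p => ⁅p.1, p.2⁆).prod) ≤ 2 * L.length - 1 := by
  induction L with
  | nil => exact absurd rfl hL
  | cons p L ih =>
    rcases eq_or_ne L [] with rfl | hne
    · have := tu_commutator_le p.1 p.2
      simp only [List.map_cons, List.map_nil, List.prod_cons, List.prod_nil, mul_one,
        List.length_cons, List.length_nil]
      push_cast
      linarith
    · have hQ := ih hne
      set Q := (L.map fun p => ⁅p.1, p.2⁆).prod with hQdef
      have hlen : (1 : ℝ) ≤ L.length := by
        have : 1 ≤ L.length := List.length_pos_iff.mpr hne
        exact_mod_cast this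
      -- pointwise bound on Q
      have hpt : (Q : CircleDeg1Lift) ≤ ((Tr ((2 * L.length : ℤ)) : CircleDeg1Liftˣ) : CircleDeg1Lift) := by
        intro x
        have h1 := map_lt_add_translationNumber_add_one (Q : CircleDeg1Lift) x
        have : translationNumber (Q : CircleDeg1Lift) = tu Q := rfl
        rw [Tr_apply]
        push_cast
        nlinarith [h1, hQ]
      have h2 : ((⁅p.1, p.2⁆ * Q : CircleDeg1Liftˣ) : CircleDeg1Lift) ≤ ((⁅p.1, p.2⁆ * Tr ((2 * L.length : ℤ)) : CircleDeg1Liftˣ) : CircleDeg1Lift) := by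
        intro x
        simp only [Units.val_mul, mul_apply]
        exact (⁅p.1, p.2⁆ : CircleDeg1Liftˣ).val.mono (hpt x)
      have h3 := translationNumber_mono h2
      have h4 : tu (⁅p.1, p.2⁆ * Tr ((2 * L.length : ℤ))) = tu ⁅p.1, p.2⁆ + (2 * L.length : ℤ) :=
        tu_mul_Tr_int _ _
      have h5 := tu_commutator_le p.1 p.2
      have : tu (⁅p.1, p.2⁆ * Q) ≤ tu ⁅p.1, p.2⁆ + 2 * L.length := by
        have h3' : tu (⁅p.1, p.2⁆ * Q) ≤ tu (⁅p.1, p.2⁆ * Tr ((2 * L.length : ℤ))) := h3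
        rw [h4] at h3'
        push_cast at h3' ⊢
        linarith
      have hgoal : tu (⁅p.1, p.2⁆ * Q) ≤ 2 * (L.length + 1) - 1 := by linarith
      simpa [List.map_cons, List.prod_cons, Nat.cast_add] using hgoal


open CircleDeg1Lift


noncomputable def gfun (u : ℝ) : ℝ := if u ≤ 3/4 then u/6 else (7*u-5)/2
noncomputable def hfun (u : ℝ) : ℝ := if u ≤ 1/8 then 6*u else (2*u+5)/7

theorem gfun_mono : Monotone gfun := by
  intro u v huv; unfold gfun; split_ifs with h1 h2 h2 <;> linarith
theorem hfun_mono : Monotone hfun := by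
  intro u v huv; unfold hfun; split_ifs with h1 h2 h2 <;> linarith
theorem gfun_nonneg : ∀ u : ℝ, 0 ≤ u → 0 ≤ gfun u := by
  intro u h; unfold gfun; split_ifs with h1 <;> linarith
theorem gfun_lt_one : ∀ u : ℝ, u < 1 → gfun u < 1 := by
  intro u h; unfold gfun; split_ifs with h1 <;> linarith
theorem hfun_nonneg : ∀ u : ℝ, 0 ≤ u → 0 ≤ hfun u := by
  intro u h; unfold hfun; split_ifs with h1 <;> linarith
theorem hfun_lt_one : ∀ u : ℝ, u < 1 → hfun u < 1 := by
  intro u h; unfold hfun; split_ifs with h1 <;> linarith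
theorem gfun_hfun (u : ℝ) : gfun (hfun u) = u := by
  unfold gfun hfun; split_ifs with h1 h2 h2 <;> linarith
theorem hfun_gfun (u : ℝ) : hfun (gfun u) = u := by
  unfold gfun hfun; split_ifs with h1 h2 h2 <;> linarith

/-- build a CircleDeg1Lift from a fundamental-domain map -/
noncomputable def mkLift (φ : ℝ → ℝ) (hm : Monotone φ) (h0 : ∀ u, 0 ≤ u → 0 ≤ φ u)
    (h1 : ∀ u, u < 1 → φ u < 1) : CircleDeg1Lift where
  toFun := fun x => ⌊x⌋ + φ (Int.fract x)
  monotone' := by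
    intro x y hxy
    dsimp only
    rcases lt_or_eq_of_le (Int.floor_mono hxy) with h | h
    · have hx1 : φ (Int.fract x) < 1 := h1 _ (Int.fract_lt_one x)
      have hy0 : 0 ≤ φ (Int.fract y) := h0 _ (Int.fract_nonneg y)
      have hfl : (⌊x⌋ : ℝ) + 1 ≤ (⌊y⌋ : ℝ) := by exact_mod_cast h
      linarith
    · have hf : Int.fract x ≤ Int.fract y := by
        unfold Int.fract
        rw [h]
        have hc : ((⌊y⌋ : ℤ) : ℝ) = ((⌊y⌋ : ℤ) : ℝ) := rfl
        linarith [hxy]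
      have := hm hf
      have hfl : ((⌊x⌋ : ℤ) : ℝ) = ((⌊y⌋ : ℤ) : ℝ) := by exact_mod_cast h
      linarith
  map_add_one' := by
    intro x
    rw [Int.floor_add_one, Int.fract_add_one]
    push_cast
    ring

theorem mkLift_apply (φ : ℝ → ℝ) (hm h0 h1) (x : ℝ) :
    mkLift φ hm h0 h1 x = ⌊x⌋ + φ (Int.fract x) := rfl

noncomputable def Alift : CircleDeg1Lift := mkLift gfun gfun_mono gfun_nonneg gfun_lt_one
noncomputable def Ainvlift : CircleDeg1Lift := mkLift hfun hfun_mono hfun_nonneg hfun_lt_one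

theorem lift_inv_aux (φ ψ : ℝ → ℝ) (hm h0 h1 hm' h0' h1')
    (hcomp : ∀ u, φ (ψ u) = u) (x : ℝ) :
    mkLift φ hm h0 h1 (mkLift ψ hm' h0' h1' x) = x := by
  rw [mkLift_apply, mkLift_apply]
  have hψ0 : 0 ≤ ψ (Int.fract x) := h0' _ (Int.fract_nonneg x)
  have hψ1 : ψ (Int.fract x) < 1 := h1' _ (Int.fract_lt_one x)
  have hfl : ⌊(⌊x⌋ : ℝ) + ψ (Int.fract x)⌋ = ⌊x⌋ := by
    rw [Int.floor_intCast_add]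
    · rw [Int.floor_eq_zero_iff.mpr ⟨hψ0, hψ1⟩]; ring
  have hfr : Int.fract ((⌊x⌋ : ℝ) + ψ (Int.fract x)) = ψ (Int.fract x) := by
    rw [Int.fract_intCast_add]
    exact Int.fract_eq_self.mpr ⟨hψ0, hψ1⟩
  rw [hfl, hfr, hcomp]
  exact Int.floor_add_fract x

noncomputable def 𝔸 : CircleDeg1Liftˣ where
  val := Alift
  inv := Ainvlift
  val_inv := CircleDeg1Lift.ext fun x =>
    lift_inv_aux gfun hfun gfun_mono gfun_nonneg gfun_lt_one hfun_mono hfun_nonneg hfun_lt_one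
      gfun_hfun x
  inv_val := CircleDeg1Lift.ext fun x =>
    lift_inv_aux hfun gfun hfun_mono hfun_nonneg hfun_lt_one gfun_mono gfun_nonneg gfun_lt_one
      hfun_gfun x

noncomputable def 𝔹 : CircleDeg1Liftˣ := (Tr (1/2))⁻¹ * 𝔸 * Tr (1/2)

theorem A_apply (x : ℝ) : (𝔸 : CircleDeg1Lift) x = ⌊x⌋ + gfun (Int.fract x) := rfl

theorem B_apply (x : ℝ) : (𝔹 : CircleDeg1Lift) x = -(1/2) + (𝔸 : CircleDeg1Lift) (1/2 + x) := by
  simp only [𝔹, Units.val_mul, mul_apply]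
  rfl

theorem gfun_eval_small {u : ℝ} (h : u ≤ 3/4) : gfun u = u/6 := if_pos h

theorem A_eval_zero : (𝔸 : CircleDeg1Lift) 0 = 0 := by
  rw [A_apply]
  norm_num [gfun_eval_small]

theorem A_eval_one : (𝔸 : CircleDeg1Lift) 1 = 1 := by
  have := (𝔸 : CircleDeg1Lift).map_add_one 0
  rw [A_eval_zero] at this
  simpa using this

theorem A_nonneg {x : ℝ} (h : 0 ≤ x) : 0 ≤ (𝔸 : CircleDeg1Lift) x := by
  have := (𝔸 : CircleDeg1Lift).mono h
  rw [A_eval_zero] at this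
  exact this

theorem B_eval_half : (𝔹 : CircleDeg1Lift) (1/2) = 1/2 := by
  rw [B_apply]
  norm_num [A_eval_one]

theorem AB_eval : ((𝔸 * 𝔹 : CircleDeg1Liftˣ) : CircleDeg1Lift) (1/4) ≤ 1/4 + ((-1 : ℤ) : ℝ) := by
  have hB : (𝔹 : CircleDeg1Lift) (1/4) = -(3/8) := by
    rw [B_apply]
    have : (1:ℝ)/2 + 1/4 = 3/4 := by norm_num
    rw [this, A_apply]
    have h1 : ⌊(3:ℝ)/4⌋ = 0 := by
      rw [Int.floor_eq_zero_iff]; constructor <;> norm_num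
    have h2 : Int.fract ((3:ℝ)/4) = 3/4 := by
      rw [Int.fract_eq_self]; constructor <;> norm_num
    rw [h1, h2, gfun_eval_small (by norm_num)]
    norm_num
  have hA : (𝔸 : CircleDeg1Lift) (-(3/8)) = -(43/48) := by
    rw [A_apply]
    have h1 : ⌊(-(3/8) : ℝ)⌋ = -1 := by
      rw [Int.floor_eq_iff]
      constructor <;> norm_num
    have h2 : Int.fract ((-(3/8)) : ℝ) = 5/8 := by
      have : Int.fract ((-(3/8)) : ℝ) = -(3/8) - ⌊(-(3/8) : ℝ)⌋ := rfl
      rw [this, h1]; norm_num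
    rw [h1, h2, gfun_eval_small (by norm_num)]
    norm_num
  have : ((𝔸 * 𝔹 : CircleDeg1Liftˣ) : CircleDeg1Lift) (1/4) = (𝔸 : CircleDeg1Lift) ((𝔹 : CircleDeg1Lift) (1/4)) := by
    rw [Units.val_mul, CircleDeg1Lift.mul_apply]
  rw [this, hB, hA]
  norm_num

theorem tau_AB_le : tu (𝔸 * 𝔹) ≤ -1 := by
  have := CircleDeg1Lift.translationNumber_le_of_le_add_int _ AB_eval
  simpa [tu] using this

theorem Bpow_eval_half (n : ℕ) : ((𝔹 ^ n : CircleDeg1Liftˣ) : CircleDeg1Lift) (1/2) = 1/2 := by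
  induction n with
  | zero => simp
  | succ k ih =>
    have : (𝔹 ^ (k+1) : CircleDeg1Liftˣ) = 𝔹 * 𝔹 ^ k := by
      rw [pow_succ']
    rw [this, Units.val_mul, CircleDeg1Lift.mul_apply, ih, B_eval_half]

theorem Apow_nonneg (n : ℕ) {x : ℝ} (h : 0 ≤ x) :
    0 ≤ ((𝔸 ^ n : CircleDeg1Liftˣ) : CircleDeg1Lift) x := by
  induction n with
  | zero => simpa using h
  | succ k ih =>
    have : (𝔸 ^ (k+1) : CircleDeg1Liftˣ) = 𝔸 * 𝔸 ^ k := by rw [pow_succ']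
    rw [this, Units.val_mul, CircleDeg1Lift.mul_apply]
    exact A_nonneg ih

theorem tau_AnBn_ge (n : ℕ) : (-1 : ℝ) ≤ tu (𝔸 ^ n * 𝔹 ^ n) := by
  have hpt : (1/2 : ℝ) + ((-1 : ℤ) : ℝ) ≤ ((𝔸 ^ n * 𝔹 ^ n : CircleDeg1Liftˣ) : CircleDeg1Lift) (1/2) := by
    rw [Units.val_mul, CircleDeg1Lift.mul_apply, Bpow_eval_half]
    have h := Apow_nonneg n (le_of_lt (by norm_num : (0:ℝ) < 1/2))
    have h2 : ((-1:ℤ):ℝ) = -1 := by norm_num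
    rw [h2]
    linarith
  have := CircleDeg1Lift.le_translationNumber_of_add_int_le _ hpt
  simpa [tu] using this

/-! ### explicit CBI moves -/

def la (k : ℕ) : List AB := List.replicate k AB.a
def lb (k : ℕ) : List AB := List.replicate k AB.b

theorem vAB_zero : vAB 0 = [] := rfl

theorem vAB_succ (n : ℕ) : vAB (n + 1) = [AB.a, AB.b] ++ vAB n := rfl
theorem vAB_one : vAB 1 = [AB.a, AB.b] := rfl

theorem vAB_succ' (n : ℕ) : vAB (n + 1) = vAB n ++ [AB.a, AB.b] := by
  induction n with
  | zero => rfl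
  | succ m ih =>
    rw [vAB_succ (m+1), ih]
    rw [show ([AB.a, AB.b] ++ (vAB m ++ [AB.a, AB.b]) : List AB)
      = ([AB.a, AB.b] ++ vAB m) ++ [AB.a, AB.b] from by simp]
    rw [← vAB_succ m]
    rw [ih]

theorem vAB_s2 (m : ℕ) : vAB (m + 2) = [AB.a, AB.b] ++ vAB m ++ [AB.a, AB.b] := by
  rw [vAB_succ' (m+1), vAB_succ m]

theorem la_add (p q : ℕ) : la (p + q) = la p ++ la q := by
  unfold la; rw [List.replicate_add]
theorem lb_add (p q : ℕ) : lb (p + q) = lb p ++ lb q := by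
  unfold lb; rw [List.replicate_add]

/-- Step move S1 -/
theorem step_S1 (k m : ℕ) :
    IsCBI (la (k+1) ++ (lb (k+1) ++ vAB (m+2))) (la (k+3) ++ (lb (k+3) ++ vAB m)) := by
  refine ⟨la (k+1) ++ (lb (k+1) ++ vAB (m+2)),
    (la (k+1) ++ (lb (k+3) ++ vAB m)) ++ la 2, ?_, ?_,
    la (k+1) ++ lb (k+1), [AB.a], [AB.b] ++ vAB m ++ [AB.a], [AB.b], ?_, ?_⟩
  · exact List.IsRotated.refl _
  · have h : la (k+3) ++ (lb (k+3) ++ vAB m) = la 2 ++ (la (k+1) ++ (lb (k+3) ++ vAB m)) := by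
      have : (k+3) = 2 + (k+1) := by omega
      rw [this, la_add]
      simp
    rw [h]
    exact List.isRotated_append
  · rw [vAB_s2]
    simp
  · have h1 : lb (k+3) = lb (k+1) ++ [AB.b] ++ [AB.b] := by
      have : (k+3) = (k+1) + 1 + 1 := by omega
      rw [this, lb_add, lb_add]
      rfl
    have h2 : la 2 = [AB.a] ++ [AB.a] := rfl
    rw [h1, h2]
    simp

/-- Step move S3 (final move for even n) -/
theorem step_S3 (k : ℕ) :
    IsCBI (la k ++ (lb k ++ vAB 1)) (la (k+1) ++ lb (k+1)) := by
  refine ⟨la k ++ (lb k ++ vAB 1), (la k ++ lb (k+1)) ++ [AB.a], ?_, ?_,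
    la k, lb k ++ [AB.a], [], [AB.b], ?_, ?_⟩
  · exact List.IsRotated.refl _
  · have h : la (k+1) ++ lb (k+1) = [AB.a] ++ (la k ++ lb (k+1)) := by
      have : (k+1) = 1 + k := by omega
      rw [this, la_add]
      simp [la]
    rw [h]
    exact List.isRotated_append
  · rw [vAB_one]
    simp
  · have h1 : lb (k+1) = [AB.b] ++ lb k := by
      have : (k+1) = 1 + k := by omega
      rw [this, lb_add]
      rfl
    rw [h1]
    simp

/-- the interpolating sequence of words -/
noncomputable def zz (n : ℕ) : ℕ → List AB := fun i =>
  if 2*i+2 ≤ n then la (2*i+1) ++ (lb (2*i+1) ++ vAB (n-1-2*i)) else wAB n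

theorem zz_zero (n : ℕ) (h : 2 ≤ n) : zz n 0 = vAB n := by
  unfold zz
  rw [if_pos (by omega)]
  have h1 : la (2*0+1) = [AB.a] := rfl
  have h2 : lb (2*0+1) = [AB.b] := rfl
  rw [h1, h2]
  have h3 : n = (n - 1 - 2*0) + 1 := by omega
  conv_rhs => rw [h3]
  rw [vAB_succ]
  rfl

theorem zz_top (n i : ℕ) (h : n / 2 ≤ i) : zz n i = wAB n := by
  unfold zz
  rw [if_neg (by omega)]

theorem wAB_eq (n : ℕ) : wAB n = la n ++ lb n := rfl

theorem zz_step (n : ℕ) (h2 : 2 ≤ n) : ∀ i, i < n / 2 → IsCBI (zz n i) (zz n (i+1)) := by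
  intro i hi
  have hle : 2*i+2 ≤ n := by omega
  have hzi : zz n i = la (2*i+1) ++ (lb (2*i+1) ++ vAB (n-1-2*i)) := by
    unfold zz; rw [if_pos hle]
  rcases Nat.lt_or_ge (2*i+4) (n+1) with h4 | h4
  · -- 2i+4 ≤ n
    have hzi1 : zz n (i+1) = la (2*i+3) ++ (lb (2*i+3) ++ vAB (n-3-2*i)) := by
      unfold zz
      rw [if_pos (by omega)]
      have e1 : 2*(i+1)+1 = 2*i+3 := by omega
      have e2 : n-1-2*(i+1) = n-3-2*i := by omega
      rw [e1, e2]
    rw [hzi, hzi1]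
    have e3 : n-1-2*i = (n-3-2*i)+2 := by omega
    rw [e3]
    have e4 : 2*i+3 = (2*i)+3 := by omega
    have e5 : 2*i+1 = (2*i)+1 := by omega
    rw [e4, e5]
    exact step_S1 (2*i) (n-3-2*i)
  · -- n = 2i+2 or n = 2i+3
    have hzi1 : zz n (i+1) = wAB n := by
      unfold zz; rw [if_neg (by omega)]
    rcases Nat.eq_or_lt_of_le hle with he | hlt
    · -- n = 2i+2 : use S3
      have e1 : n-1-2*i = 1 := by omega
      rw [hzi, hzi1, e1, wAB_eq]
      have e2 : n = (2*i+1)+1 := by omega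
      rw [e2]
      exact step_S3 (2*i+1)
    · -- n = 2i+3 : use S1 with m = 0
      have hn : n = 2*i+3 := by omega
      have e1 : n-1-2*i = 2 := by omega
      rw [hzi, hzi1, e1, wAB_eq, hn]
      have := step_S1 (2*i) 0
      rw [vAB_zero] at this
      simpa using this

/-! ### transporting CBI moves to the free group -/

theorem toFree_append {A : Type*} (x y : List A) :
    toFree (x ++ y) = toFree x * toFree y := by
  unfold toFree
  rw [List.map_append, List.prod_append]

theorem toFree_rotated {A : Type*} {l m : List A} (h : List.IsRotated l m) :
    ∃ u : FreeGroup A, toFree m = u * toFree l * u⁻¹ := by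
  obtain ⟨n, hn, hrot⟩ := List.isRotated_iff_mod.mp h
  refine ⟨(toFree (List.take n l))⁻¹, ?_⟩
  rw [← hrot, List.rotate_eq_drop_append_take hn, toFree_append]
  have : toFree l = toFree (List.take n l) * toFree (List.drop n l) := by
    rw [← toFree_append, List.take_append_drop]
  rw [this]
  group

theorem commutator_word_identity {G : Type*} [Group G] (x y z : G) :
    x * y * z * x⁻¹ * y⁻¹ * z⁻¹ = ⁅x * y, z * x⁻¹⁆ := by
  rw [commutatorElement_def]
  group

theorem isCBI_toFree {x y : List AB} (h : IsCBI x y) :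
    ∃ p q u : FreeGroup AB, toFree y = ⁅p, q⁆ * (u * toFree x * u⁻¹) := by
  obtain ⟨v', w', hv, hw, w1, w2, w3, w4, hv', hw'⟩ := h
  obtain ⟨c, hc⟩ := toFree_rotated hv
  obtain ⟨d, hd⟩ := toFree_rotated hw
  set A1 := toFree w1
  set A2 := toFree w2
  set A3 := toFree w3
  set A4 := toFree w4
  have hV : toFree v' = A1 * A2 * A3 * A4 := by
    rw [hv', toFree_append, toFree_append, toFree_append]
  have hW : toFree w' = A1 * A4 * A3 * A2 := by
    rw [hw', toFree_append, toFree_append, toFree_append]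
  refine ⟨d * (A1 * (A4 * A3) * A1⁻¹) * d⁻¹, d * (A1 * (A2 * A4⁻¹) * A1⁻¹) * d⁻¹,
    d * c⁻¹, ?_⟩
  rw [hd, hW, hc, hV, commutatorElement_def]
  group

theorem conj_prod_commutators {G : Type*} [Group G] (c : G)
    (L : List (G × G)) :
    ((L.map fun p => (c * p.1 * c⁻¹, c * p.2 * c⁻¹)).map fun p => ⁅p.1, p.2⁆).prod
      = c * (L.map fun p => ⁅p.1, p.2⁆).prod * c⁻¹ := by
  induction L with
  | nil => simp
  | cons p L ih =>
    simp only [List.map_cons, List.prod_cons, ih]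
    rw [commutatorElement_def, commutatorElement_def]
    group

/-- a chain of k CBI moves from x to y yields an expression of
`toFree y * (U * (toFree x)⁻¹ * U⁻¹)` as a product of k commutators. -/
theorem chain_commutators (z : ℕ → List AB) :
    ∀ k : ℕ, (∀ i < k, IsCBI (z i) (z (i + 1))) →
    ∃ (U : FreeGroup AB) (L : List (FreeGroup AB × FreeGroup AB)),
      L.length = k ∧
      (L.map fun p => ⁅p.1, p.2⁆).prod = toFree (z k) * (U * (toFree (z 0))⁻¹ * U⁻¹) := by
  intro k
  induction k with
  | zero =>
    intro _
    exact ⟨1, [], rfl, by simp⟩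
  | succ m ih =>
    intro hstep
    obtain ⟨U, L, hlen, hprod⟩ := ih (fun i hi => hstep i (by omega))
    obtain ⟨p, q, u, hpq⟩ := isCBI_toFree (hstep m (by omega))
    refine ⟨u * U, (p, q) :: (L.map fun r => (u * r.1 * u⁻¹, u * r.2 * u⁻¹)), ?_, ?_⟩
    · simp [hlen]
    · simp only [List.map_cons, List.prod_cons]
      rw [conj_prod_commutators, hprod, hpq]
      group

/-! ### The cyclic descent-count invariant -/

/-- non-cyclic adjacent pair count for a junction-weight `j` -/
def dW (j : AB → AB → ℕ) : List AB → ℕ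
  | [] => 0
  | [_] => 0
  | x :: y :: t => j x y + dW j (y :: t)

def jopt (j : AB → AB → ℕ) : Option AB → Option AB → ℕ
  | some x, some y => j x y
  | _, _ => 0

/-- cyclic adjacent pair count -/
def fW (j : AB → AB → ℕ) (l : List AB) : ℕ := dW j l + jopt j l.getLast? l.head?

def jBA : AB → AB → ℕ := fun x y => if x = AB.b ∧ y = AB.a then 1 else 0
def jAB : AB → AB → ℕ := fun x y => if x = AB.a ∧ y = AB.b then 1 else 0

theorem dW_append (j : AB → AB → ℕ) :
    ∀ x y : List AB, dW j (x ++ y) = dW j x + dW j y + jopt j x.getLast? y.head? := by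
  intro x
  induction x with
  | nil => intro y; simp [dW, jopt]
  | cons c t ih =>
    intro y
    cases t with
    | nil =>
      cases y with
      | nil => simp [dW, jopt]
      | cons d s => simp [dW, jopt]; ring
    | cons c2 t2 =>
      have h1 : (c :: c2 :: t2) ++ y = c :: ((c2 :: t2) ++ y) := rfl
      have h2 : (c2 :: t2) ++ y = c2 :: (t2 ++ y) := rfl
      rw [h1]
      have h3 : dW j (c :: ((c2 :: t2) ++ y)) = j c c2 + dW j ((c2 :: t2) ++ y) := by
        rw [h2]; rfl
      rw [h3, ih y]
      have h4 : (c :: c2 :: t2).getLast? = (c2 :: t2).getLast? := by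
        simp [List.getLast?]
      rw [h4]
      have h5 : dW j (c :: c2 :: t2) = j c c2 + dW j (c2 :: t2) := rfl
      rw [h5]
      ring

theorem fW_swap (j : AB → AB → ℕ) (x y : List AB) : fW j (x ++ y) = fW j (y ++ x) := by
  rcases eq_or_ne x [] with rfl | hx
  · simp
  rcases eq_or_ne y [] with rfl | hy
  · simp
  unfold fW
  rw [dW_append, dW_append]
  rw [List.head?_append_of_ne_nil x hx, List.head?_append_of_ne_nil y hy]
  have hgx : (x ++ y).getLast? = y.getLast? := by
    rw [List.getLast?_append]
    cases hyl : y.getLast? with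
    | none => exact absurd (List.getLast?_eq_none_iff.mp hyl) hy
    | some c => rfl
  have hgy : (y ++ x).getLast? = x.getLast? := by
    rw [List.getLast?_append]
    cases hxl : x.getLast? with
    | none => exact absurd (List.getLast?_eq_none_iff.mp hxl) hx
    | some c => rfl
  rw [hgx, hgy]
  ring

theorem fW_rotated (j : AB → AB → ℕ) {l l' : List AB} (h : List.IsRotated l l') :
    fW j l = fW j l' := by
  obtain ⟨n, hn, hrot⟩ := List.isRotated_iff_mod.mp h
  rw [← hrot, List.rotate_eq_drop_append_take hn, ← fW_swap, List.take_append_drop]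

def valAB : AB → ℤ | AB.a => 0 | AB.b => 1

theorem dW_balance : ∀ (l : List AB) (x : AB),
    (dW jAB (x :: l) : ℤ) - dW jBA (x :: l) = valAB ((x :: l).getLast (by simp)) - valAB x := by
  intro l
  induction l with
  | nil => intro x; simp [dW]
  | cons y t ih =>
    intro x
    have h1 : dW jAB (x :: y :: t) = jAB x y + dW jAB (y :: t) := rfl
    have h2 : dW jBA (x :: y :: t) = jBA x y + dW jBA (y :: t) := rfl
    have h3 : (x :: y :: t).getLast (by simp) = (y :: t).getLast (by simp) := by
      simp [List.getLast]
    rw [h1, h2, h3]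
    have h4 := ih y
    have h5 : (jAB x y : ℤ) - jBA x y = valAB y - valAB x := by
      cases x <;> cases y <;> simp [jAB, jBA, valAB]
    push_cast
    push_cast at h4
    linarith

theorem fW_balance (l : List AB) : fW jAB l = fW jBA l := by
  cases l with
  | nil => rfl
  | cons x t =>
    unfold fW
    have hlast : (x :: t).getLast? = some ((x :: t).getLast (by simp)) := by
      rw [List.getLast?_eq_getLast]
    have hhead : (x :: t).head? = some x := rfl
    rw [hlast, hhead]
    have hbal := dW_balance t x
    set c := (x :: t).getLast (by simp) with hc
    have hj : (jopt jAB (some c) (some x) : ℤ) - jopt jBA (some c) (some x)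
        = valAB x - valAB c := by
      cases c <;> cases x <;> simp [jopt, jAB, jBA, valAB]
    have : (dW jAB (x :: t) : ℤ) + jopt jAB (some c) (some x)
        = (dW jBA (x :: t) : ℤ) + jopt jBA (some c) (some x) := by linarith
    exact_mod_cast this

def jNE : AB → AB → ℕ := fun x y => jBA x y + jAB x y

theorem dW_add (j j' : AB → AB → ℕ) :
    ∀ l : List AB, dW (fun x y => j x y + j' x y) l = dW j l + dW j' l := by
  intro l
  induction l with
  | nil => rfl
  | cons x t ih =>
    cases t with
    | nil => rfl
    | cons y s =>
      have h : ∀ (jj : AB → AB → ℕ), dW jj (x :: y :: s) = jj x y + dW jj (y :: s) :=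
        fun _ => rfl
      rw [h, h, h, ih]
      ring

theorem fW_NE (l : List AB) : fW jNE l = fW jBA l + fW jAB l := by
  unfold fW jNE
  rw [dW_add]
  have : ∀ o o' : Option AB, jopt (fun x y => jBA x y + jAB x y) o o' =
      jopt jBA o o' + jopt jAB o o' := by
    intro o o'
    cases o <;> cases o' <;> rfl
  rw [this]
  ring

theorem jopt_le_one : ∀ (o o' : Option AB), jopt jNE o o' ≤ 1 := by
  intro o o'
  cases o with
  | none => exact Nat.zero_le 1
  | some x => cases o' with
    | none => exact Nat.zero_le 1
    | some y => cases x <;> cases y <;> simp [jopt, jNE, jBA, jAB]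

theorem fW_NE_upper (w1 w2 w3 w4 : List AB) :
    fW jNE (w1 ++ w2 ++ w3 ++ w4) ≤ dW jNE w1 + dW jNE w2 + dW jNE w3 + dW jNE w4 + 4 := by
  unfold fW
  rw [dW_append, dW_append, dW_append]
  have b1 := jopt_le_one (w1 ++ w2 ++ w3).getLast? w4.head?
  have b2 := jopt_le_one (w1 ++ w2).getLast? w3.head?
  have b3 := jopt_le_one w1.getLast? w2.head?
  have b4 := jopt_le_one (w1 ++ w2 ++ w3 ++ w4).getLast? (w1 ++ w2 ++ w3 ++ w4).head?
  omega

theorem fW_NE_lower (w1 w2 w3 w4 : List AB) :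
    dW jNE w1 + dW jNE w2 + dW jNE w3 + dW jNE w4 ≤ fW jNE (w1 ++ w4 ++ w3 ++ w2) := by
  unfold fW
  rw [dW_append, dW_append, dW_append]
  omega

/-- One cyclic block interchange decreases the cyclic `ba`-descent count by at most 2. -/
theorem fW_step {x y : List AB} (h : IsCBI x y) : fW jBA x ≤ fW jBA y + 2 := by
  obtain ⟨v', w', hv, hw, w1, w2, w3, w4, hv', hw'⟩ := h
  have hx : fW jBA x = fW jBA v' := (fW_rotated jBA hv).symm
  have hy : fW jBA y = fW jBA w' := (fW_rotated jBA hw).symm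
  rw [hx, hy, hv', hw']
  have h1 : fW jNE (w1 ++ w2 ++ w3 ++ w4) ≤ fW jNE (w1 ++ w4 ++ w3 ++ w2) + 4 := by
    have := fW_NE_upper w1 w2 w3 w4
    have := fW_NE_lower w1 w2 w3 w4
    omega
  have e1 := fW_NE (w1 ++ w2 ++ w3 ++ w4)
  have e2 := fW_NE (w1 ++ w4 ++ w3 ++ w2)
  have e3 := fW_balance (w1 ++ w2 ++ w3 ++ w4)
  have e4 := fW_balance (w1 ++ w4 ++ w3 ++ w2)
  omega

theorem dW_replicate (j : AB → AB → ℕ) (c : AB) (h : j c c = 0) :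
    ∀ n, dW j (List.replicate n c) = 0 := by
  intro n
  induction n with
  | zero => rfl
  | succ m ih =>
    cases m with
    | zero => rfl
    | succ m' =>
      have : List.replicate (m' + 2) c = c :: c :: List.replicate m' c := rfl
      rw [this]
      have h2 : dW j (c :: c :: List.replicate m' c) = j c c + dW j (c :: List.replicate m' c) := rfl
      rw [h2, h]
      have : c :: List.replicate m' c = List.replicate (m' + 1) c := rfl
      rw [this, ih]

theorem replicate_head? (c : AB) (n : ℕ) (h : 1 ≤ n) :
    (List.replicate n c).head? = some c := by
  cases n with
  | zero => omega
  | succ m => rfl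

theorem replicate_getLast? (c : AB) (n : ℕ) (h : 1 ≤ n) :
    (List.replicate n c).getLast? = some c := by
  induction n with
  | zero => omega
  | succ m ih =>
    cases m with
    | zero => rfl
    | succ m' =>
      have h1 : List.replicate (m' + 2) c = [c] ++ List.replicate (m' + 1) c := rfl
      rw [h1, List.getLast?_append, ih (by omega)]
      rfl

theorem fW_wAB (n : ℕ) (h : 1 ≤ n) : fW jBA (wAB n) = 1 := by
  unfold fW wAB
  rw [dW_append, dW_replicate jBA AB.a rfl, dW_replicate jBA AB.b rfl]
  rw [replicate_getLast? AB.a n h, replicate_head? AB.b n h]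
  rw [List.getLast?_append, replicate_getLast? AB.b n h]
  rw [List.head?_append_of_ne_nil _ (by simp; omega), replicate_head? AB.a n h]
  rfl

theorem vAB_facts (n : ℕ) (h : 1 ≤ n) :
    dW jBA (vAB n) = n - 1 ∧ (vAB n).head? = some AB.a ∧ (vAB n).getLast? = some AB.b := by
  induction n with
  | zero => omega
  | succ m ih =>
    cases Nat.eq_or_lt_of_le h with
    | inl h1 =>
      have : m = 0 := by omega
      subst this
      refine ⟨rfl, rfl, rfl⟩
    | inr h1 =>
      have hm : 1 ≤ m := by omega
      obtain ⟨ih1, ih2, ih3⟩ := ih hm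
      have hne : vAB m ≠ [] := by
        intro hc
        rw [hc] at ih2
        exact absurd ih2 (by simp)
      constructor
      · rw [vAB_succ, dW_append, ih2]
        have : dW jBA [AB.a, AB.b] = 0 := rfl
        rw [this, ih1]
        have : jopt jBA [AB.a, AB.b].getLast? (some AB.a) = 1 := rfl
        rw [this]
        omega
      constructor
      · rw [vAB_succ]; rfl
      · rw [vAB_succ, List.getLast?_append, ih3]
        rfl

theorem fW_vAB (n : ℕ) (h : 1 ≤ n) : fW jBA (vAB n) = n := by
  obtain ⟨h1, h2, h3⟩ := vAB_facts n h
  unfold fW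
  rw [h1, h3, h2]
  have : jopt jBA (some AB.b) (some AB.a) = 1 := rfl
  rw [this]
  omega

theorem chain_bound (z : ℕ → List AB) :
    ∀ k, (∀ i < k, IsCBI (z i) (z (i + 1))) → fW jBA (z 0) ≤ fW jBA (z k) + 2 * k := by
  intro k
  induction k with
  | zero => intro _; omega
  | succ m ih =>
    intro hstep
    have h1 := ih (fun i hi => hstep i (by omega))
    have h2 := fW_step (hstep m (by omega))
    omega

theorem not_rotated_vw (n : ℕ) (h : 2 ≤ n) : ¬ List.IsRotated (vAB n) (wAB n) := by
  intro hc
  have := fW_rotated jBA hc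
  rw [fW_vAB n (by omega), fW_wAB n (by omega)] at this
  omega
/-! ### the representation into circle maps and the commutator-length lower bound -/

noncomputable def rhoAB : FreeGroup AB →* CircleDeg1Liftˣ :=
  FreeGroup.lift fun x => match x with
    | AB.a => 𝔸
    | AB.b => 𝔹

theorem toFree_replicate {A : Type*} (c : A) (n : ℕ) :
    toFree (List.replicate n c) = (FreeGroup.of c) ^ n := by
  induction n with
  | zero => rfl
  | succ m ih =>
    have : List.replicate (m+1) c = [c] ++ List.replicate m c := rfl
    rw [this, toFree_append, ih, pow_succ']
    rfl

theorem toFree_wAB (n : ℕ) :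
    toFree (wAB n) = (FreeGroup.of AB.a) ^ n * (FreeGroup.of AB.b) ^ n := by
  unfold wAB
  rw [toFree_append, toFree_replicate, toFree_replicate]

theorem toFree_vAB (n : ℕ) :
    toFree (vAB n) = (FreeGroup.of AB.a * FreeGroup.of AB.b) ^ n := by
  induction n with
  | zero => rfl
  | succ m ih =>
    rw [vAB_succ, toFree_append, ih, pow_succ']
    have : toFree [AB.a, AB.b] = FreeGroup.of AB.a * FreeGroup.of AB.b := by
      unfold toFree; simp
    rw [this]

theorem rho_wAB (n : ℕ) : rhoAB (toFree (wAB n)) = 𝔸 ^ n * 𝔹 ^ n := by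
  rw [toFree_wAB, map_mul, map_pow, map_pow]
  unfold rhoAB
  rw [FreeGroup.lift_apply_of, FreeGroup.lift_apply_of]

theorem rho_vAB (n : ℕ) : rhoAB (toFree (vAB n)) = (𝔸 * 𝔹) ^ n := by
  rw [toFree_vAB, map_pow, map_mul]
  unfold rhoAB
  rw [FreeGroup.lift_apply_of, FreeGroup.lift_apply_of]

theorem tu_pow (u : CircleDeg1Liftˣ) (n : ℕ) : tu (u ^ n) = n * tu u := by
  have : ((u ^ n : CircleDeg1Liftˣ) : CircleDeg1Lift) = (u : CircleDeg1Lift) ^ n :=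
    Units.val_pow_eq_pow_val u n
  unfold tu
  rw [this, CircleDeg1Lift.translationNumber_pow]

theorem tu_V_inv (n : ℕ) : (n : ℝ) ≤ tu (((𝔸 * 𝔹) ^ n)⁻¹) := by
  rw [tu_inv, tu_pow]
  have := tau_AB_le
  nlinarith [this, Nat.cast_nonneg (α := ℝ) n]

theorem rho_prod_commutators (L : List (FreeGroup AB × FreeGroup AB)) :
    rhoAB ((L.map fun p => ⁅p.1, p.2⁆).prod)
      = ((L.map fun p => (rhoAB p.1, rhoAB p.2)).map fun p => ⁅p.1, p.2⁆).prod := by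
  induction L with
  | nil => simp
  | cons p L ih =>
    simp only [List.map_cons, List.prod_cons, map_mul, ih]
    congr 1
    rw [commutatorElement_def, commutatorElement_def]
    simp [map_mul, map_inv]

/-- Milnor–Wood style lower bound for the number of commutators needed. -/
theorem cl_lower_bound (n : ℕ) (t0 t1 : FreeGroup AB)
    (L : List (FreeGroup AB × FreeGroup AB))
    (hL : (L.map fun p => ⁅p.1, p.2⁆).prod
      = t0 * toFree (wAB n) * t0⁻¹ * (t1 * (toFree (vAB n))⁻¹ * t1⁻¹)) :
    n / 2 ≤ L.length := by
  have hτW : (-1 : ℝ) ≤ tu (𝔸 ^ n * 𝔹 ^ n) := tau_AnBn_ge n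
  rcases eq_or_ne L [] with rfl | hne
  · -- empty product: conjugate words, contradiction unless n ≤ 1
    simp only [List.map_nil, List.prod_nil] at hL
    have h1 : t0 * toFree (wAB n) * t0⁻¹ = t1 * toFree (vAB n) * t1⁻¹ := by
      have := hL.symm
      rw [mul_eq_one_iff_eq_inv] at this
      rw [this]
      group
    have h2 := congrArg rhoAB h1
    simp only [map_mul, map_inv, rho_wAB, rho_vAB] at h2
    have h3 : tu (rhoAB t0 * (𝔸 ^ n * 𝔹 ^ n) * (rhoAB t0)⁻¹)
        = tu (𝔸 ^ n * 𝔹 ^ n) := tu_conj _ _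
    have h4 : tu (rhoAB t1 * ((𝔸 * 𝔹) ^ n) * (rhoAB t1)⁻¹)
        = tu ((𝔸 * 𝔹) ^ n) := tu_conj _ _
    rw [h2] at h3
    rw [h4] at h3
    have h5 : tu ((𝔸 * 𝔹) ^ n) ≤ -(n : ℝ) := by
      rw [tu_pow]
      have := tau_AB_le
      nlinarith [Nat.cast_nonneg (α := ℝ) n]
    have h6 : (n : ℝ) ≤ 1 := by
      rw [h3] at h5
      linarith
    have : n ≤ 1 := by exact_mod_cast h6
    simp
    omega
  · -- nonempty: Milnor–Wood
    have h2 := congrArg rhoAB hL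
    rw [rho_prod_commutators] at h2
    simp only [map_mul, map_inv, rho_wAB, rho_vAB] at h2
    set L' := L.map fun p => (rhoAB p.1, rhoAB p.2) with hL'
    have hne' : L' ≠ [] := by
      simp [hL']
      exact hne
    have hMW := tu_prod_commutators_le L' hne'
    rw [h2] at hMW
    have hlen' : L'.length = L.length := by simp [hL']
    rw [hlen'] at hMW
    -- lower bound on tu of the right-hand side
    have hsplit := tu_mul_ge (rhoAB t0 * (𝔸 ^ n * 𝔹 ^ n) * (rhoAB t0)⁻¹)
      (rhoAB t1 * ((𝔸 * 𝔹) ^ n)⁻¹ * (rhoAB t1)⁻¹)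
    have hc1 : tu (rhoAB t0 * (𝔸 ^ n * 𝔹 ^ n) * (rhoAB t0)⁻¹) = tu (𝔸 ^ n * 𝔹 ^ n) :=
      tu_conj _ _
    have hc2 : tu (rhoAB t1 * ((𝔸 * 𝔹) ^ n)⁻¹ * (rhoAB t1)⁻¹) = tu (((𝔸 * 𝔹) ^ n)⁻¹) :=
      tu_conj _ _
    rw [hc1, hc2] at hsplit
    have hV := tu_V_inv n
    have : (n : ℝ) - 2 ≤ 2 * L.length - 1 := by
      calc (n : ℝ) - 2 ≤ tu (𝔸 ^ n * 𝔹 ^ n) + tu (((𝔸 * 𝔹) ^ n)⁻¹) - 1 := by linarith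
        _ ≤ tu (rhoAB t0 * (𝔸 ^ n * 𝔹 ^ n) * (rhoAB t0)⁻¹ *
              (rhoAB t1 * ((𝔸 * 𝔹) ^ n)⁻¹ * (rhoAB t1)⁻¹)) := hsplit
        _ ≤ 2 * L.length - 1 := hMW
    have hnat : n ≤ 2 * L.length + 1 := by
      have : (n : ℝ) ≤ 2 * L.length + 1 := by linarith
      exact_mod_cast this
    omega
/-! ### assembly -/

theorem nat_half_le (n X : ℕ) (h : n ≤ 1 + 2 * X) : n / 2 ≤ X := by omega

theorem count_vAB (c : AB) (n : ℕ) : (vAB n).count c = n := by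
  induction n with
  | zero => cases c <;> rfl
  | succ m ih =>
    rw [vAB_succ, List.count_append, ih]
    have : List.count c [AB.a, AB.b] = 1 := by cases c <;> rfl
    rw [this]
    omega

theorem count_wAB (c : AB) (n : ℕ) : (wAB n).count c = n := by
  unfold wAB
  rw [List.count_append, List.count_replicate, List.count_replicate]
  cases c <;> simp

theorem related_vw (n : ℕ) : Related (vAB n) (wAB n) := by
  intro c
  rw [count_vAB, count_wAB]

theorem vw_one : vAB 1 = wAB 1 := rfl

theorem dcbi_eq (n : ℕ) (hn : 1 ≤ n) : dcbi (vAB n) (wAB n) = n / 2 := by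
  rcases Nat.lt_or_ge n 2 with h2 | h2
  · have h1 : n = 1 := by omega
    subst h1
    unfold dcbi
    rw [if_pos (vw_one ▸ List.IsRotated.refl (vAB 1))]
  · unfold dcbi
    rw [if_neg (not_rotated_vw n h2)]
    have hmem : n / 2 ∈ {k | ∃ z : ℕ → List AB, z 0 = vAB n ∧ z k = wAB n ∧
        ∀ i < k, IsCBI (z i) (z (i + 1))} :=
      ⟨zz n, zz_zero n h2, zz_top n (n/2) (le_refl _), fun i hi => zz_step n h2 i hi⟩
    refine le_antisymm (Nat.sInf_le hmem) ?_
    have hne : Set.Nonempty {k | ∃ z : ℕ → List AB, z 0 = vAB n ∧ z k = wAB n ∧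
        ∀ i < k, IsCBI (z i) (z (i + 1))} := ⟨n / 2, hmem⟩
    obtain ⟨z, hz0, hzk, hsteps⟩ := Nat.sInf_mem hne
    have hbd := chain_bound z _ hsteps
    have hn1 : 1 ≤ n := le_trans one_le_two h2
    rw [hz0, hzk, fW_vAB n hn1, fW_wAB n hn1] at hbd
    exact nat_half_le n _ hbd

theorem clChain_eq (n : ℕ) (hn : 1 ≤ n) :
    clChain (FreeGroup AB) [toFree (wAB n), (toFree (vAB n))⁻¹] = n / 2 := by
  set W := toFree (wAB n) with hW
  set V := toFree (vAB n) with hV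
  rcases Nat.lt_or_ge n 2 with hlt | h2
  · -- n = 1
    have h1 : n = 1 := by omega
    subst h1
    have hWV : W = V := by rw [hW, hV, vw_one]
    unfold clChain
    have hq : (List.zipWith (fun a b => a * b * a⁻¹) [(1 : FreeGroup AB), 1] [W, V⁻¹]).prod
        = 1 := by
      simp [hWV]
    have hcl : cl (FreeGroup AB)
        ((List.zipWith (fun a b => a * b * a⁻¹) [(1 : FreeGroup AB), 1] [W, V⁻¹]).prod) = 0 := by
      rw [hq]
      unfold cl
      have : (0 : ℕ) ∈ {k | ∃ l : List (FreeGroup AB × FreeGroup AB),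
          l.length = k ∧ (l.map fun p => ⁅p.1, p.2⁆).prod = 1} := ⟨[], rfl, by simp⟩
      exact Nat.eq_zero_of_le_zero (Nat.sInf_le this)
    have hmem : (0 : ℕ) ∈ {m | ∃ t : List (FreeGroup AB), t.length = ([W, V⁻¹] : List (FreeGroup AB)).length ∧
        m = cl (FreeGroup AB) (List.zipWith (fun a b => a * b * a⁻¹) t [W, V⁻¹]).prod} :=
      ⟨[1, 1], rfl, hcl.symm⟩
    simpa using Nat.eq_zero_of_le_zero (Nat.sInf_le hmem)
  · -- n ≥ 2
    obtain ⟨U, L, hlen, hprod⟩ := chain_commutators (zz n) (n / 2)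
      (fun i hi => zz_step n h2 i hi)
    rw [zz_top n (n/2) (le_refl _), zz_zero n h2] at hprod
    rw [← hW, ← hV] at hprod
    -- hprod : prod = W * (U * V⁻¹ * U⁻¹)
    unfold clChain
    apply le_antisymm
    · -- upper bound
      have hclle : cl (FreeGroup AB)
          ((List.zipWith (fun a b => a * b * a⁻¹) [(1 : FreeGroup AB), U] [W, V⁻¹]).prod)
          ≤ n / 2 := by
        apply Nat.sInf_le
        refine ⟨L, hlen, ?_⟩
        rw [hprod]
        simp [mul_assoc]
      have hmem : cl (FreeGroup AB)
          ((List.zipWith (fun a b => a * b * a⁻¹) [(1 : FreeGroup AB), U] [W, V⁻¹]).prod)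
          ∈ {m | ∃ t : List (FreeGroup AB), t.length = ([W, V⁻¹] : List (FreeGroup AB)).length ∧
          m = cl (FreeGroup AB) (List.zipWith (fun a b => a * b * a⁻¹) t [W, V⁻¹]).prod} :=
        ⟨[1, U], rfl, rfl⟩
      exact le_trans (Nat.sInf_le hmem) hclle
    · -- lower bound
      have hmemS : cl (FreeGroup AB)
          ((List.zipWith (fun a b => a * b * a⁻¹) [(1 : FreeGroup AB), U] [W, V⁻¹]).prod)
          ∈ {m | ∃ t : List (FreeGroup AB), t.length = ([W, V⁻¹] : List (FreeGroup AB)).length ∧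
          m = cl (FreeGroup AB) (List.zipWith (fun a b => a * b * a⁻¹) t [W, V⁻¹]).prod} :=
        ⟨[1, U], rfl, rfl⟩
      refine le_csInf ⟨_, hmemS⟩ ?_
      rintro m ⟨t, hlen2, hmq⟩
      have hlen2' : t.length = 2 := by simpa using hlen2
      obtain ⟨t0, t1, rfl⟩ := List.length_eq_two.mp hlen2'
      set q := (List.zipWith (fun a b => a * b * a⁻¹) [t0, t1] [W, V⁻¹]).prod with hqdef
      have hqe : q = t0 * W * t0⁻¹ * (t1 * V⁻¹ * t1⁻¹) := by
        rw [hqdef]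
        simp [mul_assoc]
      -- q is a product of commutators (so the sInf is over a nonempty set)
      have hKne : Set.Nonempty {k | ∃ l : List (FreeGroup AB × FreeGroup AB),
          l.length = k ∧ (l.map fun p => ⁅p.1, p.2⁆).prod = q} := by
        refine ⟨_, (L.map fun r => (t0 * r.1 * t0⁻¹, t0 * r.2 * t0⁻¹)) ++
          [((t0 * U) * V * (t0 * U)⁻¹, t1 * (t0 * U)⁻¹)], rfl, ?_⟩
        rw [List.map_append, List.prod_append, conj_prod_commutators, hprod]
        simp only [List.map_cons, List.map_nil, List.prod_cons, List.prod_nil, mul_one]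
        rw [hqe, commutatorElement_def]
        group
      obtain ⟨L2, hlen3, hprod2⟩ := Nat.sInf_mem hKne
      have hlb := cl_lower_bound n t0 t1 L2 (by rw [hprod2, hqe, hW, hV])
      have hclq : cl (FreeGroup AB) q = sInf {k | ∃ l : List (FreeGroup AB × FreeGroup AB),
          l.length = k ∧ (l.map fun p => ⁅p.1, p.2⁆).prod = q} := rfl
      rw [hmq, hclq, ← hlen3]
      exact hlb



/-- For `n ≥ 1`, the words `vₙ = (ab)ⁿ` and `wₙ = aⁿbⁿ` are related and
`d_cbi(vₙ, wₙ) = ⌊n/2⌋`; equivalently, `cl_{F(a,b)}(aⁿbⁿ + (ab)⁻ⁿ) = ⌊n/2⌋`. -/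
theorem dcbi_ab_pow (n : ℕ) (hn : 1 ≤ n) :
    Related (vAB n) (wAB n) ∧ dcbi (vAB n) (wAB n) = n / 2 ∧
    clChain (FreeGroup AB) [toFree (wAB n), (toFree (vAB n))⁻¹] = n / 2 :=
  ⟨related_vw n, dcbi_eq n hn, clChain_eq n hn⟩
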